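/- Let H be a commutative cancellative monoid with quotient group K such that the submonoid extension H ⊆ H̃ is inert and H̃ = {x ∈ K : x^k ∈ H} for some fixed positive integer k. Then the extension H' ⊆ H̃ is also inert, where H' = {x ∈ K : there exists N ∈ ℕ with x^n ∈ H for all n ≥ N} is the seminormal closure of H. -/
import Mathlib


variable {K : Type*} [CommGroup K]

/-- The root closure of a submonoid `H` of its quotient group `K`. -/
def rootClosure (H : Submonoid K) : Set K :=
  {x : K | ∃ n : ℕ, 0 < n ∧ x ^ n ∈ H}

/-- The seminormal closure of a submonoid `H` of its quotient group `K`. -/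
def seminormalClosure (H : Submonoid K) : Set K :=
  {x : K | ∃ N : ℕ, ∀ n : ℕ, N ≤ n → x ^ n ∈ H}

/-- The extension `A ⊆ B` is inert. -/
def InertExt (A B : Set K) : Prop :=
  ∀ x ∈ B, ∀ y ∈ B, x * y ∈ A →
    ∃ ε : K, ε ∈ B ∧ ε⁻¹ ∈ B ∧ x * ε ∈ A ∧ y * ε⁻¹ ∈ A

private lemma key_lemma (H : Submonoid K) (x ε : K) (N k : ℕ) (hk : 0 < k)
    (ha : x ^ (N * k + 1) * ε ∈ H) (hb : x ^ k ∈ H) (hc : ε ^ k ∈ H) :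
    ∀ m : ℕ, k * (N * k + 1) ≤ m → x ^ m * ε ^ m ∈ H := by
  intro m hm
  set n := N * k + 1 with hn
  set r := m % k with hr
  set q := m / k with hq
  have hqr : k * q + r = m := Nat.div_add_mod m k
  have hrk : r < k := Nat.mod_lt _ hk
  have hnq : n ≤ q := (Nat.le_div_iff_mul_le hk).mpr (by rw [mul_comm] at hm; exact hm)
  have hrN : r * N ≤ q := by
    have h1 : r * N ≤ (k - 1) * N := Nat.mul_le_mul_right N (by omega)
    have h2 : (k - 1) * N ≤ k * N := Nat.mul_le_mul_right N (Nat.sub_le k 1)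
    have h3 : k * N ≤ n := by rw [hn, mul_comm]; omega
    omega
  obtain ⟨β, hβ⟩ : ∃ β, q = r * N + β := ⟨q - r * N, by omega⟩
  have e1 : n * r + k * β = m := by
    rw [← hqr, hβ, hn]; ring
  have e2 : r + k * q = m := by omega
  have key : x ^ m * ε ^ m = (x ^ n * ε) ^ r * (x ^ k) ^ β * (ε ^ k) ^ q := by
    rw [mul_pow, ← pow_mul, ← pow_mul, ← pow_mul]
    calc x ^ m * ε ^ m = x ^ (n * r + k * β) * ε ^ (r + k * q) := by rw [e1, e2]
      _ = x ^ (n * r) * ε ^ r * x ^ (k * β) * ε ^ (k * q) := by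
          rw [pow_add, pow_add, mul_mul_mul_comm, mul_assoc, mul_assoc, mul_assoc]
  rw [key]
  exact mul_mem (mul_mem (pow_mem ha r) (pow_mem hb β)) (pow_mem hc q)

theorem stmt18 (H : Submonoid K) (k : ℕ) (hk : 0 < k)
    (hchar : ∀ x : K, x ∈ rootClosure H ↔ x ^ k ∈ H)
    (hinert : InertExt (H : Set K) (rootClosure H)) :
    InertExt (seminormalClosure H) (rootClosure H) := by
  intro x hx y hy hxy
  obtain ⟨N, hN⟩ := hxy
  set n := N * k + 1 with hn
  have hNn : N ≤ n := by
    have := Nat.le_mul_of_pos_right N hk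
    omega
  have hxk : x ^ k ∈ H := (hchar x).mp hx
  have hyk : y ^ k ∈ H := (hchar y).mp hy
  have hxn : x ^ n ∈ rootClosure H := ⟨k, hk, by
    rw [← pow_mul, mul_comm, pow_mul]; exact pow_mem hxk n⟩
  have hyn : y ^ n ∈ rootClosure H := ⟨k, hk, by
    rw [← pow_mul, mul_comm, pow_mul]; exact pow_mem hyk n⟩
  have hprod : x ^ n * y ^ n ∈ H := by
    rw [← mul_pow]; exact hN n hNn
  obtain ⟨ε, hε, hεinv, ha, hb⟩ := hinert _ hxn _ hyn hprod
  have hεk : ε ^ k ∈ H := (hchar ε).mp hε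
  have hεik : (ε⁻¹) ^ k ∈ H := (hchar ε⁻¹).mp hεinv
  refine ⟨ε, hε, hεinv, ⟨k * n, fun m hm => ?_⟩, ⟨k * n, fun m hm => ?_⟩⟩
  · rw [mul_pow]
    exact key_lemma H x ε N k hk ha hxk hεk m hm
  · rw [mul_pow]
    exact key_lemma H y ε⁻¹ N k hk hb hyk hεik m hm
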